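/- The covariance estimator ĈovA for Cov(Ŷ(d_k), Ŷ(d_l)), formed by the Horvitz-Thompson term over pairs with π_{ij}(d_k,d_l) > 0 minus the Young's-inequality correction term over pairs with π_{ij}(d_k,d_l) = 0 (including i = j), satisfies E[ĈovA] ≤ Cov(Ŷ(d_k), Ŷ(d_l)); consequently the combined variance estimator (1/N²)[V̂(d_k) + Â₂(d_k) + V̂(d_l) + Â₂(d_l) − 2ĈovA] is nonnegatively biased for Var(τ̂(d_k,d_l)). -/

import Mathlib

open Finset

noncomputable def expect {Ωs : Type*} [Fintype Ωs] (p : Ωs → ℝ) (X : Ωs → ℝ) : ℝ :=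
  ∑ ω, p ω * X ω

noncomputable def Var' {Ωs : Type*} [Fintype Ωs] (p : Ωs → ℝ) (X : Ωs → ℝ) : ℝ :=
  expect p (fun ω => (X ω - expect p X) ^ 2)

noncomputable def Cov' {Ωs : Type*} [Fintype Ωs] (p : Ωs → ℝ) (X Y : Ωs → ℝ) : ℝ :=
  expect p (fun ω => (X ω - expect p X) * (Y ω - expect p Y))

section helpers
variable {Ωs : Type*} [Fintype Ωs] (p : Ωs → ℝ)

lemma expect_sum' {ι : Type*} (s : Finset ι) (f : ι → Ωs → ℝ) :
    expect p (fun ω => ∑ i ∈ s, f i ω) = ∑ i ∈ s, expect p (f i) := by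
  simp only [_root_.expect, Finset.mul_sum]
  exact Finset.sum_comm

lemma expect_const (hp1 : ∑ ω, p ω = 1) (c : ℝ) : expect p (fun _ => c) = c := by
  simp only [_root_.expect]
  rw [← Finset.sum_mul, hp1, one_mul]

lemma expect_const_mul (c : ℝ) (f : Ωs → ℝ) :
    expect p (fun ω => c * f ω) = c * expect p f := by
  unfold _root_.expect
  rw [Finset.mul_sum]
  exact Finset.sum_congr rfl (fun ω _ => by ring)

lemma expect_mul_const (c : ℝ) (f : Ωs → ℝ) :
    expect p (fun ω => f ω * c) = expect p f * c := by
  unfold _root_.expect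
  rw [Finset.sum_mul]
  exact Finset.sum_congr rfl (fun ω _ => by ring)

lemma expect_add (f g : Ωs → ℝ) :
    expect p (fun ω => f ω + g ω) = expect p f + expect p g := by
  simp [_root_.expect, mul_add, Finset.sum_add_distrib]

lemma expect_sub (f g : Ωs → ℝ) :
    expect p (fun ω => f ω - g ω) = expect p f - expect p g := by
  simp [_root_.expect, mul_sub, Finset.sum_sub_distrib]

lemma cov_eq (hp1 : ∑ ω, p ω = 1) (X Y : Ωs → ℝ) :
    Cov' p X Y = expect p (fun ω => X ω * Y ω) - expect p X * expect p Y := by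
  have h1 : (fun ω => (X ω - expect p X) * (Y ω - expect p Y))
      = fun ω => X ω * Y ω - expect p X * Y ω - expect p Y * X ω
          + (fun _ : Ωs => expect p X * expect p Y) ω := by
    funext ω; ring
  unfold Cov'
  rw [h1, expect_add, expect_sub, expect_sub, expect_const_mul, expect_const_mul,
    expect_const p hp1]
  ring

lemma var_diff (c : ℝ) (X Y : Ωs → ℝ) :
    Var' p (fun ω => c * (X ω - Y ω))
      = c^2 * Var' p X + c^2 * Var' p Y - 2*c^2 * Cov' p X Y := by
  have hE : expect p (fun ω => c * (X ω - Y ω)) = c * (expect p X - expect p Y) := by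
    rw [expect_const_mul, expect_sub]
  have key : (fun ω => ((fun ω => c * (X ω - Y ω)) ω
        - expect p (fun ω => c * (X ω - Y ω))) ^ 2)
      = fun ω => c^2 * (X ω - expect p X)^2 + (c^2 * (Y ω - expect p Y)^2
          - 2*c^2 * ((X ω - expect p X) * (Y ω - expect p Y))) := by
    funext ω; rw [hE]; ring
  unfold Var' Cov'
  rw [key, expect_add, expect_sub, expect_const_mul, expect_const_mul, expect_const_mul]
  ring

end helpers

open scoped Classical in
lemma AS_var {Ωs : Type*} [Fintype Ωs] (p : Ωs → ℝ)
    (hp0 : ∀ ω, 0 ≤ p ω) (hp1 : ∑ ω, p ω = 1)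
    {N : ℕ} {Δ : Type*} [DecidableEq Δ]
    (D : Fin N → Ωs → Δ) (y : Fin N → ℝ) (d : Δ)
    (π : Fin N → ℝ)
    (hπ : ∀ i, π i = ∑ ω, p ω * (if D i ω = d then (1:ℝ) else 0))
    (hπpos : ∀ i, 0 < π i)
    (πij : Fin N → Fin N → ℝ)
    (hπij : ∀ i j, πij i j = ∑ ω, p ω *
      ((if D i ω = d then (1:ℝ) else 0) * (if D j ω = d then (1:ℝ) else 0)))
    (Y V A2 : Ωs → ℝ)
    (hY : ∀ ω, Y ω = ∑ i, (if D i ω = d then (1:ℝ) else 0) * y i / π i)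
    (hV : ∀ ω, V ω = ∑ i, (if D i ω = d then (1:ℝ) else 0) * (1 - π i) * (y i / π i)^2
      + ∑ i, ∑ j ∈ (Finset.univ.erase i).filter (fun j => 0 < πij i j),
          (if D i ω = d then (1:ℝ) else 0) * (if D j ω = d then (1:ℝ) else 0)
            * ((πij i j - π i * π j) / πij i j) * (y i / π i) * (y j / π j))
    (hA2 : ∀ ω, A2 ω = ∑ i, ∑ j ∈ (Finset.univ.erase i).filter (fun j => πij i j = 0),
        ((if D i ω = d then (1:ℝ) else 0) * y i ^2 / (2*π i)
          + (if D j ω = d then (1:ℝ) else 0) * y j ^2 / (2*π j))) :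
    Var' p Y ≤ expect p V + expect p A2 := by
  have hπne : ∀ i, π i ≠ 0 := fun i => (hπpos i).ne'
  -- indicator moment
  have hI : ∀ i, expect p (fun ω => if D i ω = d then (1:ℝ) else 0) = π i :=
    fun i => (hπ i).symm
  have hII : ∀ i j, expect p (fun ω =>
      (if D i ω = d then (1:ℝ) else 0) * (if D j ω = d then (1:ℝ) else 0)) = πij i j :=
    fun i j => (hπij i j).symm
  have hπij_nonneg : ∀ i j, 0 ≤ πij i j := by
    intro i j
    rw [hπij]
    refine Finset.sum_nonneg fun ω _ => mul_nonneg (hp0 ω) (mul_nonneg ?_ ?_) <;>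
      · split <;> norm_num
  have hπij_diag : ∀ i, πij i i = π i := by
    intro i
    rw [hπij, hπ]
    refine Finset.sum_congr rfl fun ω _ => ?_
    by_cases h : D i ω = d <;> simp [h]
  -- E Y
  have hEY : expect p Y = ∑ i, y i := by
    rw [show Y = fun ω => ∑ i, (if D i ω = d then (1:ℝ) else 0) * y i / π i from funext hY,
      expect_sum']
    refine Finset.sum_congr rfl fun i _ => ?_
    have h2 : (fun ω => (if D i ω = d then (1:ℝ) else 0) * y i / π i)
        = fun ω => (if D i ω = d then (1:ℝ) else 0) * (y i / π i) := by
      funext ω; ring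
    rw [h2, expect_mul_const, hI]
    have h3 : π i ≠ 0 := hπne i
    field_simp
  -- E [Y^2]
  have hEY2 : expect p (fun ω => Y ω * Y ω)
      = ∑ i, ∑ j, (y i / π i) * (y j / π j) * πij i j := by
    have h2 : (fun ω => Y ω * Y ω) = fun ω => ∑ i, ∑ j,
        ((if D i ω = d then (1:ℝ) else 0) * (if D j ω = d then (1:ℝ) else 0))
          * ((y i / π i) * (y j / π j)) := by
      funext ω
      rw [hY, Finset.sum_mul_sum]
      exact Finset.sum_congr rfl fun i _ => Finset.sum_congr rfl fun j _ => by ring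
    rw [h2, expect_sum']
    refine Finset.sum_congr rfl fun i _ => ?_
    rw [expect_sum']
    refine Finset.sum_congr rfl fun j _ => ?_
    rw [expect_mul_const, hII]
    ring
  -- Var
  have hVar : Var' p Y = ∑ i, ∑ j, ((y i / π i) * (y j / π j) * πij i j - y i * y j) := by
    have : Var' p Y = Cov' p Y Y := by
      unfold Var' Cov'
      exact congrArg _ (funext fun ω => sq (Y ω - expect p Y) ▸ by ring)
    rw [this, cov_eq p hp1, hEY2, hEY, Finset.sum_mul_sum, ← Finset.sum_sub_distrib]
    exact Finset.sum_congr rfl fun i _ => (Finset.sum_sub_distrib _ _).symm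
  -- E V
  have hEV : expect p V
      = ∑ i, π i * (1 - π i) * (y i / π i)^2
        + ∑ i, ∑ j ∈ (Finset.univ.erase i).filter (fun j => 0 < πij i j),
            ((y i / π i) * (y j / π j) * πij i j - y i * y j) := by
    rw [show V = fun ω =>
        (fun ω => ∑ i, (if D i ω = d then (1:ℝ) else 0) * (1 - π i) * (y i / π i)^2) ω
        + (fun ω => ∑ i, ∑ j ∈ (Finset.univ.erase i).filter (fun j => 0 < πij i j),
            (if D i ω = d then (1:ℝ) else 0) * (if D j ω = d then (1:ℝ) else 0)
              * ((πij i j - π i * π j) / πij i j) * (y i / π i) * (y j / π j)) ω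
      from funext hV, expect_add]
    congr 1
    · rw [expect_sum']
      refine Finset.sum_congr rfl fun i _ => ?_
      have h2 : (fun ω => (if D i ω = d then (1:ℝ) else 0) * (1 - π i) * (y i / π i)^2)
          = fun ω => (if D i ω = d then (1:ℝ) else 0) * ((1 - π i) * (y i / π i)^2) := by
        funext ω; ring
      rw [h2, expect_mul_const, hI]
      ring
    · rw [expect_sum']
      refine Finset.sum_congr rfl fun i _ => ?_
      rw [expect_sum']
      refine Finset.sum_congr rfl fun j hj => ?_
      have hpos : 0 < πij i j := (Finset.mem_filter.mp hj).2
      have h2 : (fun ω => (if D i ω = d then (1:ℝ) else 0) * (if D j ω = d then (1:ℝ) else 0)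
            * ((πij i j - π i * π j) / πij i j) * (y i / π i) * (y j / π j))
          = fun ω => ((if D i ω = d then (1:ℝ) else 0) * (if D j ω = d then (1:ℝ) else 0))
              * (((πij i j - π i * π j) / πij i j) * (y i / π i) * (y j / π j)) := by
        funext ω; ring
      have h3 : πij i j ≠ 0 := hpos.ne'
      have h4 : π i ≠ 0 := hπne i
      have h5 : π j ≠ 0 := hπne j
      rw [h2, expect_mul_const, hII]
      field_simp
  -- E A2
  have hEA2 : expect p A2
      = ∑ i, ∑ j ∈ (Finset.univ.erase i).filter (fun j => πij i j = 0),
          (y i ^2 / 2 + y j ^2 / 2) := by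
    rw [show A2 = fun ω => ∑ i, ∑ j ∈ (Finset.univ.erase i).filter (fun j => πij i j = 0),
        ((if D i ω = d then (1:ℝ) else 0) * y i ^2 / (2*π i)
          + (if D j ω = d then (1:ℝ) else 0) * y j ^2 / (2*π j)) from funext hA2,
      expect_sum']
    refine Finset.sum_congr rfl fun i _ => ?_
    rw [expect_sum']
    refine Finset.sum_congr rfl fun j _ => ?_
    have h2 : (fun ω => (if D i ω = d then (1:ℝ) else 0) * y i ^2 / (2*π i)
          + (if D j ω = d then (1:ℝ) else 0) * y j ^2 / (2*π j))
        = fun ω => (fun ω => (if D i ω = d then (1:ℝ) else 0) * (y i ^2 / (2*π i))) ω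
            + (fun ω => (if D j ω = d then (1:ℝ) else 0) * (y j ^2 / (2*π j))) ω := by
      funext ω; ring
    have h3 : π i ≠ 0 := hπne i
    have h4 : π j ≠ 0 := hπne j
    rw [h2, expect_add, expect_mul_const, expect_mul_const, hI, hI]
    field_simp
  -- combine
  have hsplit : ∀ i : Fin N,
      ∑ j, ((y i / π i) * (y j / π j) * πij i j - y i * y j)
      = (π i * (1 - π i) * (y i / π i)^2)
        + (∑ j ∈ (Finset.univ.erase i).filter (fun j => πij i j = 0),
            ((y i / π i) * (y j / π j) * πij i j - y i * y j)
          + ∑ j ∈ (Finset.univ.erase i).filter (fun j => 0 < πij i j),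
            ((y i / π i) * (y j / π j) * πij i j - y i * y j)) := by
    intro i
    rw [← Finset.add_sum_erase _ _ (Finset.mem_univ i)]
    congr 1
    · have h3 : π i ≠ 0 := hπne i
      rw [hπij_diag]
      field_simp
    · rw [← Finset.sum_filter_add_sum_filter_not (Finset.univ.erase i)
        (fun j => πij i j = 0)]
      congr 1
      apply Finset.sum_congr _ (fun _ _ => rfl)
      apply Finset.filter_congr
      intro j _
      constructor
      · exact fun h => (hπij_nonneg i j).lt_of_ne (Ne.symm h)
      · exact fun h => h.ne'
  have hBG : ∑ i, ∑ j ∈ (Finset.univ.erase i).filter (fun j => πij i j = 0),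
        ((y i / π i) * (y j / π j) * πij i j - y i * y j)
      ≤ ∑ i, ∑ j ∈ (Finset.univ.erase i).filter (fun j => πij i j = 0),
        (y i ^2 / 2 + y j ^2 / 2) := by
    refine Finset.sum_le_sum fun i _ => Finset.sum_le_sum fun j hj => ?_
    have h0 : πij i j = 0 := (Finset.mem_filter.mp hj).2
    rw [h0]
    nlinarith [sq_nonneg (y i + y j)]
  rw [hVar, hEV, hEA2, Finset.sum_congr rfl fun i _ => hsplit i,
    Finset.sum_add_distrib, Finset.sum_add_distrib]
  linarith
open scoped Classical in
/-- The covariance estimator is nonpositively biased for the covariance of the HT totals,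
and consequently the combined variance estimator is nonnegatively biased for the variance
of the difference-in-means estimator. -/
theorem stmt8 {Ωs : Type*} [Fintype Ωs] (p : Ωs → ℝ)
    (hp0 : ∀ ω, 0 ≤ p ω) (hp1 : ∑ ω, p ω = 1)
    {N : ℕ} (hN : 0 < N) {Δ : Type*} [DecidableEq Δ]
    (D : Fin N → Ωs → Δ) (y : Fin N → Δ → ℝ)
    (π : Fin N → Δ → ℝ)
    (hπ : ∀ i d, π i d = ∑ ω, p ω * (if D i ω = d then (1:ℝ) else 0))
    (hπ01 : ∀ i d, 0 < π i d ∧ π i d < 1)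
    (dk dl : Δ) (hkl : dk ≠ dl)
    -- joint probabilities within exposure dk, within dl, and across (dk, dl)
    (πijk πijl πc : Fin N → Fin N → ℝ)
    (hπijk : ∀ i j, πijk i j = ∑ ω, p ω *
      ((if D i ω = dk then (1:ℝ) else 0) * (if D j ω = dk then (1:ℝ) else 0)))
    (hπijl : ∀ i j, πijl i j = ∑ ω, p ω *
      ((if D i ω = dl then (1:ℝ) else 0) * (if D j ω = dl then (1:ℝ) else 0)))
    (hπc : ∀ i j, πc i j = ∑ ω, p ω *
      ((if D i ω = dk then (1:ℝ) else 0) * (if D j ω = dl then (1:ℝ) else 0)))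
    -- HT total estimators
    (Yk Yl : Ωs → ℝ)
    (hYk : ∀ ω, Yk ω = ∑ i, (if D i ω = dk then (1:ℝ) else 0) * y i dk / π i dk)
    (hYl : ∀ ω, Yl ω = ∑ i, (if D i ω = dl then (1:ℝ) else 0) * y i dl / π i dl)
    -- covariance estimator with Young's-inequality correction
    (CovA : Ωs → ℝ)
    (hCovA : ∀ ω, CovA ω =
      (∑ i, ∑ j ∈ (Finset.univ.erase i).filter (fun j => 0 < πc i j),
        ((if D i ω = dk then (1:ℝ) else 0) * (if D j ω = dl then (1:ℝ) else 0) / πc i j)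
          * (y i dk / π i dk) * (y j dl / π j dl) * (πc i j - π i dk * π j dl))
      - ∑ i, ∑ j ∈ Finset.univ.filter (fun j => πc i j = 0),
          ((if D i ω = dk then (1:ℝ) else 0) * y i dk ^ 2 / (2 * π i dk)
            + (if D j ω = dl then (1:ℝ) else 0) * y j dl ^ 2 / (2 * π j dl)))
    -- HT variance estimators and their correction terms for dk and dl
    (Vk Vl A2k A2l : Ωs → ℝ)
    (hVk : ∀ ω, Vk ω =
      ∑ i, (if D i ω = dk then (1:ℝ) else 0) * (1 - π i dk) * (y i dk / π i dk) ^ 2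
      + ∑ i, ∑ j ∈ (Finset.univ.erase i).filter (fun j => 0 < πijk i j),
          (if D i ω = dk then (1:ℝ) else 0) * (if D j ω = dk then (1:ℝ) else 0)
            * ((πijk i j - π i dk * π j dk) / πijk i j)
            * (y i dk / π i dk) * (y j dk / π j dk))
    (hVl : ∀ ω, Vl ω =
      ∑ i, (if D i ω = dl then (1:ℝ) else 0) * (1 - π i dl) * (y i dl / π i dl) ^ 2
      + ∑ i, ∑ j ∈ (Finset.univ.erase i).filter (fun j => 0 < πijl i j),
          (if D i ω = dl then (1:ℝ) else 0) * (if D j ω = dl then (1:ℝ) else 0)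
            * ((πijl i j - π i dl * π j dl) / πijl i j)
            * (y i dl / π i dl) * (y j dl / π j dl))
    (hA2k : ∀ ω, A2k ω = ∑ i, ∑ j ∈ (Finset.univ.erase i).filter (fun j => πijk i j = 0),
        ((if D i ω = dk then (1:ℝ) else 0) * y i dk ^ 2 / (2 * π i dk)
          + (if D j ω = dk then (1:ℝ) else 0) * y j dk ^ 2 / (2 * π j dk)))
    (hA2l : ∀ ω, A2l ω = ∑ i, ∑ j ∈ (Finset.univ.erase i).filter (fun j => πijl i j = 0),
        ((if D i ω = dl then (1:ℝ) else 0) * y i dl ^ 2 / (2 * π i dl)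
          + (if D j ω = dl then (1:ℝ) else 0) * y j dl ^ 2 / (2 * π j dl))) :
    expect p CovA ≤ Cov' p Yk Yl
    ∧ expect p (fun ω => (1 / (N : ℝ) ^ 2)
          * (Vk ω + A2k ω + Vl ω + A2l ω - 2 * CovA ω))
        ≥ Var' p (fun ω => (1 / (N : ℝ)) * (Yk ω - Yl ω)) := by
  have hπkpos : ∀ i, 0 < π i dk := fun i => (hπ01 i dk).1
  have hπlpos : ∀ i, 0 < π i dl := fun i => (hπ01 i dl).1
  have hπkne : ∀ i, π i dk ≠ 0 := fun i => (hπkpos i).ne'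
  have hπlne : ∀ i, π i dl ≠ 0 := fun i => (hπlpos i).ne'
  have hIk : ∀ i, expect p (fun ω => if D i ω = dk then (1:ℝ) else 0) = π i dk :=
    fun i => (hπ i dk).symm
  have hIl : ∀ j, expect p (fun ω => if D j ω = dl then (1:ℝ) else 0) = π j dl :=
    fun j => (hπ j dl).symm
  have hIc : ∀ i j, expect p (fun ω =>
      (if D i ω = dk then (1:ℝ) else 0) * (if D j ω = dl then (1:ℝ) else 0)) = πc i j :=
    fun i j => (hπc i j).symm
  have hπc_nonneg : ∀ i j, 0 ≤ πc i j := by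
    intro i j
    rw [hπc]
    refine Finset.sum_nonneg fun ω _ => mul_nonneg (hp0 ω) (mul_nonneg ?_ ?_) <;>
      · split <;> norm_num
  -- E Yk, E Yl
  have hEYk : expect p Yk = ∑ i, y i dk := by
    rw [show Yk = fun ω => ∑ i, (if D i ω = dk then (1:ℝ) else 0) * y i dk / π i dk
      from funext hYk, expect_sum']
    refine Finset.sum_congr rfl fun i _ => ?_
    have h2 : (fun ω => (if D i ω = dk then (1:ℝ) else 0) * y i dk / π i dk)
        = fun ω => (if D i ω = dk then (1:ℝ) else 0) * (y i dk / π i dk) := by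
      funext ω; ring
    have h3 : π i dk ≠ 0 := hπkne i
    rw [h2, expect_mul_const, hIk]
    field_simp
  have hEYl : expect p Yl = ∑ i, y i dl := by
    rw [show Yl = fun ω => ∑ i, (if D i ω = dl then (1:ℝ) else 0) * y i dl / π i dl
      from funext hYl, expect_sum']
    refine Finset.sum_congr rfl fun i _ => ?_
    have h2 : (fun ω => (if D i ω = dl then (1:ℝ) else 0) * y i dl / π i dl)
        = fun ω => (if D i ω = dl then (1:ℝ) else 0) * (y i dl / π i dl) := by
      funext ω; ring
    have h3 : π i dl ≠ 0 := hπlne i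
    rw [h2, expect_mul_const, hIl]
    field_simp
  -- E [Yk * Yl]
  have hEYkYl : expect p (fun ω => Yk ω * Yl ω)
      = ∑ i, ∑ j, (y i dk / π i dk) * (y j dl / π j dl) * πc i j := by
    have h2 : (fun ω => Yk ω * Yl ω) = fun ω => ∑ i, ∑ j,
        ((if D i ω = dk then (1:ℝ) else 0) * (if D j ω = dl then (1:ℝ) else 0))
          * ((y i dk / π i dk) * (y j dl / π j dl)) := by
      funext ω
      rw [hYk, hYl, Finset.sum_mul_sum]
      exact Finset.sum_congr rfl fun i _ => Finset.sum_congr rfl fun j _ => by ring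
    rw [h2, expect_sum']
    refine Finset.sum_congr rfl fun i _ => ?_
    rw [expect_sum']
    refine Finset.sum_congr rfl fun j _ => ?_
    rw [expect_mul_const, hIc]
    ring
  have hCov : Cov' p Yk Yl
      = ∑ i, ∑ j, ((y i dk / π i dk) * (y j dl / π j dl) * πc i j - y i dk * y j dl) := by
    rw [cov_eq p hp1, hEYkYl, hEYk, hEYl, Finset.sum_mul_sum, ← Finset.sum_sub_distrib]
    exact Finset.sum_congr rfl fun i _ => (Finset.sum_sub_distrib _ _).symm
  -- E CovA
  have hECovA : expect p CovA
      = (∑ i, ∑ j ∈ (Finset.univ.erase i).filter (fun j => 0 < πc i j),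
          ((y i dk / π i dk) * (y j dl / π j dl) * πc i j - y i dk * y j dl))
        - ∑ i, ∑ j ∈ Finset.univ.filter (fun j => πc i j = 0),
          (y i dk ^ 2 / 2 + y j dl ^ 2 / 2) := by
    rw [show CovA = fun ω =>
        (fun ω => ∑ i, ∑ j ∈ (Finset.univ.erase i).filter (fun j => 0 < πc i j),
          ((if D i ω = dk then (1:ℝ) else 0) * (if D j ω = dl then (1:ℝ) else 0) / πc i j)
            * (y i dk / π i dk) * (y j dl / π j dl) * (πc i j - π i dk * π j dl)) ω
        - (fun ω => ∑ i, ∑ j ∈ Finset.univ.filter (fun j => πc i j = 0),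
            ((if D i ω = dk then (1:ℝ) else 0) * y i dk ^ 2 / (2 * π i dk)
              + (if D j ω = dl then (1:ℝ) else 0) * y j dl ^ 2 / (2 * π j dl))) ω
      from funext hCovA, expect_sub]
    congr 1
    · rw [expect_sum']
      refine Finset.sum_congr rfl fun i _ => ?_
      rw [expect_sum']
      refine Finset.sum_congr rfl fun j hj => ?_
      have hpos : 0 < πc i j := (Finset.mem_filter.mp hj).2
      have h3 : πc i j ≠ 0 := hpos.ne'
      have h4 : π i dk ≠ 0 := hπkne i
      have h5 : π j dl ≠ 0 := hπlne j
      have h2 : (fun ω => ((if D i ω = dk then (1:ℝ) else 0)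
              * (if D j ω = dl then (1:ℝ) else 0) / πc i j)
            * (y i dk / π i dk) * (y j dl / π j dl) * (πc i j - π i dk * π j dl))
          = fun ω => ((if D i ω = dk then (1:ℝ) else 0)
              * (if D j ω = dl then (1:ℝ) else 0))
            * ((y i dk / π i dk) * (y j dl / π j dl) * (πc i j - π i dk * π j dl) / πc i j) := by
        funext ω; ring
      rw [h2, expect_mul_const, hIc]
      field_simp
    · rw [expect_sum']
      refine Finset.sum_congr rfl fun i _ => ?_
      rw [expect_sum']
      refine Finset.sum_congr rfl fun j _ => ?_
      have h3 : π i dk ≠ 0 := hπkne i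
      have h4 : π j dl ≠ 0 := hπlne j
      have h2 : (fun ω => (if D i ω = dk then (1:ℝ) else 0) * y i dk ^ 2 / (2 * π i dk)
            + (if D j ω = dl then (1:ℝ) else 0) * y j dl ^ 2 / (2 * π j dl))
          = fun ω => (fun ω => (if D i ω = dk then (1:ℝ) else 0) * (y i dk ^ 2 / (2 * π i dk))) ω
              + (fun ω => (if D j ω = dl then (1:ℝ) else 0) * (y j dl ^ 2 / (2 * π j dl))) ω := by
        funext ω; ring
      rw [h2, expect_add, expect_mul_const, expect_mul_const, hIk, hIl]
      field_simp
  -- key covariance inequality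
  have hπc_diag : ∀ i, πc i i = 0 := by
    intro i
    rw [hπc]
    refine Finset.sum_eq_zero fun ω _ => ?_
    by_cases h : D i ω = dk
    · simp [h, hkl]
    · simp [h]
  have hSc : ∀ i : Fin N, (Finset.univ.erase i).filter (fun j => 0 < πc i j)
      = Finset.univ.filter (fun j => 0 < πc i j) := by
    intro i
    ext j
    simp only [Finset.mem_filter, Finset.mem_erase, Finset.mem_univ, true_and, and_true]
    constructor
    · exact fun h => h.2
    · intro h
      refine ⟨fun hji => ?_, h⟩
      rw [hji, hπc_diag i] at h
      exact lt_irrefl 0 h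
  have hfil : ∀ i : Fin N, Finset.univ.filter (fun j => ¬ πc i j = 0)
      = Finset.univ.filter (fun j => 0 < πc i j) := by
    intro i
    apply Finset.filter_congr
    intro j _
    constructor
    · exact fun h => (hπc_nonneg i j).lt_of_ne (Ne.symm h)
    · exact fun h => h.ne'
  have hsplit : ∀ i : Fin N,
      ∑ j, ((y i dk / π i dk) * (y j dl / π j dl) * πc i j - y i dk * y j dl)
      = ∑ j ∈ Finset.univ.filter (fun j => πc i j = 0),
          ((y i dk / π i dk) * (y j dl / π j dl) * πc i j - y i dk * y j dl)
        + ∑ j ∈ Finset.univ.filter (fun j => 0 < πc i j),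
          ((y i dk / π i dk) * (y j dl / π j dl) * πc i j - y i dk * y j dl) := by
    intro i
    rw [← hfil i]
    exact (Finset.sum_filter_add_sum_filter_not _ _ _).symm
  have hTG : - ∑ i, ∑ j ∈ Finset.univ.filter (fun j => πc i j = 0),
        (y i dk ^ 2 / 2 + y j dl ^ 2 / 2)
      ≤ ∑ i, ∑ j ∈ Finset.univ.filter (fun j => πc i j = 0),
        ((y i dk / π i dk) * (y j dl / π j dl) * πc i j - y i dk * y j dl) := by
    rw [← Finset.sum_neg_distrib]
    refine Finset.sum_le_sum fun i _ => ?_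
    rw [← Finset.sum_neg_distrib]
    refine Finset.sum_le_sum fun j hj => ?_
    have h0 : πc i j = 0 := (Finset.mem_filter.mp hj).2
    rw [h0]
    nlinarith [sq_nonneg (y i dk - y j dl)]
  have key1 : expect p CovA ≤ Cov' p Yk Yl := by
    rw [hECovA, hCov, Finset.sum_congr rfl fun i _ => hsplit i, Finset.sum_add_distrib]
    have hs : ∀ i : Fin N, (Finset.univ.erase i).filter (fun j => 0 < πc i j)
        = Finset.univ.filter (fun j => 0 < πc i j) := hSc
    rw [Finset.sum_congr rfl fun i (_ : i ∈ Finset.univ) =>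
      Finset.sum_congr (hs i) fun _ _ => rfl]
    linarith
  refine ⟨key1, ?_⟩
  -- the two marginal variance inequalities
  have hVk' : Var' p Yk ≤ expect p Vk + expect p A2k :=
    AS_var p hp0 hp1 D (fun i => y i dk) dk (fun i => π i dk) (fun i => hπ i dk)
      hπkpos πijk hπijk Yk Vk A2k hYk hVk hA2k
  have hVl' : Var' p Yl ≤ expect p Vl + expect p A2l :=
    AS_var p hp0 hp1 D (fun i => y i dl) dl (fun i => π i dl) (fun i => hπ i dl)
      hπlpos πijl hπijl Yl Vl A2l hYl hVl hA2l
  have hL : expect p (fun ω => (1 / (N : ℝ) ^ 2)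
        * (Vk ω + A2k ω + Vl ω + A2l ω - 2 * CovA ω))
      = (1 / (N : ℝ) ^ 2) * (expect p Vk + expect p A2k + expect p Vl + expect p A2l
          - 2 * expect p CovA) := by
    rw [expect_const_mul]
    congr 1
    rw [expect_sub, expect_add, expect_add, expect_add, expect_const_mul]
  rw [ge_iff_le, var_diff, hL]
  have hc : (0:ℝ) ≤ 1 / (N : ℝ) ^ 2 := by positivity
  have e1 : (1 / (N:ℝ))^2 = 1 / (N:ℝ)^2 := by rw [div_pow, one_pow]
  rw [e1]
  nlinarith [mul_le_mul_of_nonneg_left hVk' hc, mul_le_mul_of_nonneg_left hVl' hc,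
    mul_le_mul_of_nonneg_left key1 hc]
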